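/- Let b ≥ 1 and k ≥ 1 be integers and let g : 𝔽₂^[b] → 𝔽₂. Define g^{⊕k} : 𝔽₂^{[k]×[b]} → 𝔽₂ by g^{⊕k}(x) = Σ_{i=1}^{k} g(x(i)) computed in 𝔽₂, where x(i) is the restriction of x to block i. Then the maximum over T ⊆ [k]×[b] of |ĝ^{⊕k}(T)| equals (the maximum over S ⊆ [b] of |ĝ(S)|)^k. -/

import Mathlib

open Finset

noncomputable section

abbrev F2 : Type := ZMod 2

/-- Restriction of `x` to block `i`. -/
def blk {ι : Type*} {b : ℕ} (x : (ι × Fin b) → F2) (i : ι) : Fin b → F2 := fun j => x (i, j)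

/-- The lifted gadget map `G(x)_i = g(x(i))`. -/
def liftG {n b : ℕ} (g : (Fin b → F2) → F2) (x : (Fin n × Fin b) → F2) : Fin n → F2 :=
  fun i => g (blk x i)

/-- Fourier coefficient of `h : 𝔽₂^J → 𝔽₂` at `T ⊆ J`. -/
def hatFC {J : Type*} [Fintype J] [DecidableEq J] (h : (J → F2) → F2) (T : Finset J) : ℝ :=
  ((2 : ℝ) ^ (Fintype.card J))⁻¹ *
    ∑ x : J → F2, (-1 : ℝ) ^ ((h x).val + ∑ j ∈ T, (x j).val)

/-- A set of vectors of the lifted space (blocks indexed by `ι`) is safe if any `k`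
linearly independent vectors in its span have supports meeting at least `k` blocks. -/
def IsSafeSet {ι : Type*} {b : ℕ} (Vs : Set ((ι × Fin b) → F2)) : Prop :=
  ∀ (k : ℕ) (w : Fin k → ((ι × Fin b) → F2)),
    (∀ m, w m ∈ Submodule.span F2 Vs) → LinearIndependent F2 w →
    k ≤ ({i : ι | ∃ m j, w m (i, j) ≠ 0} : Set ι).ncard

/-- The annihilator `L(A)` of an affine subspace: all linear forms vanishing on its
direction. -/
def annih {ι : Type*} [Fintype ι] {b : ℕ}
    (A : AffineSubspace F2 ((ι × Fin b) → F2)) : Set ((ι × Fin b) → F2) :=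
  {l | ∀ w ∈ A.direction, ∑ p : ι × Fin b, l p * w p = 0}

/-- A (nonempty) affine subspace is safe if its annihilator is safe. -/
def IsSafeAffine {ι : Type*} [Fintype ι] {b : ℕ}
    (A : AffineSubspace F2 ((ι × Fin b) → F2)) : Prop :=
  IsSafeSet (annih A)

/-- Codimension of an affine subspace of the lifted space. -/
def codim {ι : Type*} [Fintype ι] {b : ℕ}
    (A : AffineSubspace F2 ((ι × Fin b) → F2)) : ℕ :=
  Fintype.card ι * b - Module.finrank F2 A.direction

/-- Standard basis vector at coordinate `p`. -/
def stdv {ι : Type*} [DecidableEq ι] {b : ℕ} (p : ι × Fin b) : (ι × Fin b) → F2 :=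
  fun q => if q = p then 1 else 0

/-- A set of blocks `S` is acceptable for a subspace `W` if one can pick one coordinate
in each block of `S` so that no nonzero 𝔽₂-linear combination of the corresponding
standard basis vectors lies in `W`. -/
def AcceptableFor {ι : Type*} [DecidableEq ι] {b : ℕ}
    (W : Submodule F2 ((ι × Fin b) → F2)) (S : Finset ι) : Prop :=
  ∃ c : ι → Fin b, ∀ T ⊆ S, T.Nonempty → (∑ s ∈ T, stdv (s, c s)) ∉ W

/-- `âcl(A)`: the maximum size of a set of blocks acceptable for the direction of `A`. -/
def acl {ι : Type*} [Fintype ι] [DecidableEq ι] {b : ℕ}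
    (A : AffineSubspace F2 ((ι × Fin b) → F2)) : ℕ :=
  sSup {k | ∃ S : Finset ι, S.card = k ∧ AcceptableFor A.direction S}

/-- `v[∖T]`: restriction of `v` to the coordinates of blocks outside `T`. -/
def restrictOut {n b : ℕ} (T : Finset (Fin n)) (v : (Fin n × Fin b) → F2) :
    ({i : Fin n // i ∉ T} × Fin b) → F2 :=
  fun p => v (p.1.1, p.2)

/-- `T` is a deviolator for `A` if `{ℓ[∖T] : ℓ ∈ L(A)}` is safe. -/
def IsDeviolator {n b : ℕ} (A : AffineSubspace F2 ((Fin n × Fin b) → F2))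
    (T : Finset (Fin n)) : Prop :=
  IsSafeSet (restrictOut T '' annih A)

/-- A closure of `A` is a deviolator of minimum cardinality. -/
def IsClosure {n b : ℕ} (A : AffineSubspace F2 ((Fin n × Fin b) → F2))
    (T : Finset (Fin n)) : Prop :=
  IsDeviolator A T ∧ ∀ T', IsDeviolator A T' → T.card ≤ T'.card

/-- `C_y`: the set of points agreeing with `y` on all coordinates of blocks in `T`. -/
def cube {n b : ℕ} (T : Finset (Fin n)) (y : ({i : Fin n // i ∈ T} × Fin b) → F2) :
    Set ((Fin n × Fin b) → F2) :=
  {x | ∀ (i : Fin n) (hi : i ∈ T) (j : Fin b), x (i, j) = y (⟨i, hi⟩, j)}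

/-- The point of the lifted space equal to `y` on the blocks of `T` and to `x` elsewhere. -/
def glue {n b : ℕ} (T : Finset (Fin n)) (y : ({i : Fin n // i ∈ T} × Fin b) → F2)
    (x : ({i : Fin n // i ∉ T} × Fin b) → F2) : (Fin n × Fin b) → F2 :=
  fun p => if h : p.1 ∈ T then y (⟨p.1, h⟩, p.2) else x (⟨p.1, h⟩, p.2)

lemma chi_add (a c : F2) : (-1:ℝ) ^ ((a + c).val) = (-1:ℝ)^a.val * (-1:ℝ)^c.val := by
  rw [ZMod.val_add, ← pow_add, ← neg_one_pow_eq_pow_mod_two]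

lemma chi_sum {ι : Type*} (s : Finset ι) (f : ι → F2) :
    (-1:ℝ) ^ ((∑ i ∈ s, f i).val) = ∏ i ∈ s, (-1:ℝ) ^ ((f i).val) := by
  induction s using Finset.cons_induction with
  | empty => simp
  | cons a s ha ih => rw [Finset.sum_cons, Finset.prod_cons, chi_add, ih]

lemma key {b k : ℕ} (g : (Fin b → F2) → F2) (T : Finset (Fin k × Fin b)) :
    hatFC (fun x : (Fin k × Fin b) → F2 => ∑ i : Fin k, g (blk x i)) T
      = ∏ i : Fin k, hatFC g (Finset.univ.filter (fun j => (i, j) ∈ T)) := by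
  unfold hatFC
  have hsummand : ∀ x : (Fin k × Fin b) → F2,
      (-1:ℝ) ^ (((∑ i : Fin k, g (blk x i))).val + ∑ p ∈ T, (x p).val)
        = ∏ i : Fin k, ((-1:ℝ) ^ ((g (blk x i)).val +
            ∑ j ∈ Finset.univ.filter (fun j => (i, j) ∈ T), (x (i, j)).val)) := by
    intro x
    rw [pow_add, chi_sum, ← Finset.prod_pow_eq_pow_sum]
    have hT : ∏ p ∈ T, (-1:ℝ) ^ ((x p).val)
        = ∏ i : Fin k, ∏ j ∈ Finset.univ.filter (fun j => (i, j) ∈ T), (-1:ℝ) ^ ((x (i,j)).val) := by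
      have h1 : ∏ p ∈ T, (-1:ℝ) ^ ((x p).val)
          = ∏ p : Fin k × Fin b, if p ∈ T then (-1:ℝ) ^ ((x p).val) else 1 := by
        rw [Finset.prod_ite_mem, Finset.univ_inter]
      rw [h1, Fintype.prod_prod_type]
      exact Finset.prod_congr rfl fun i _ => (Finset.prod_filter _ _).symm
    rw [hT, ← Finset.prod_mul_distrib]
    exact Finset.prod_congr rfl fun i _ => by
      rw [pow_add, ← Finset.prod_pow_eq_pow_sum]
  rw [Finset.sum_congr rfl fun x _ => hsummand x]
  have he : ∑ x : (Fin k × Fin b) → F2, ∏ i : Fin k, ((-1:ℝ) ^ ((g (blk x i)).val +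
        ∑ j ∈ Finset.univ.filter (fun j => (i, j) ∈ T), (x (i, j)).val))
      = ∏ i : Fin k, ∑ y : Fin b → F2, ((-1:ℝ) ^ ((g y).val +
        ∑ j ∈ Finset.univ.filter (fun j => (i, j) ∈ T), (y j).val)) := by
    rw [Fintype.prod_sum]
    exact (Equiv.curry (Fin k) (Fin b) F2).symm.sum_comp
      (fun x => ∏ i : Fin k, ((-1:ℝ) ^ ((g (blk x i)).val +
        ∑ j ∈ Finset.univ.filter (fun j => (i, j) ∈ T), (x (i, j)).val))) |>.symm
  rw [he, Finset.prod_mul_distrib]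
  congr 1
  rw [Finset.prod_const, ← inv_pow, ← inv_pow, ← pow_mul, Finset.card_univ]
  simp [Fintype.card_prod, mul_comm]

/-- the largest Fourier coefficient of the XOR of `k` disjoint copies of a
gadget `g` is the `k`-th power of the largest Fourier coefficient of `g`. -/
theorem stmt9 {b k : ℕ} (hb : 0 < b) (hk : 0 < k)
    (g : (Fin b → F2) → F2) :
    (Finset.univ.sup' Finset.univ_nonempty
        (fun T : Finset (Fin k × Fin b) =>
          |hatFC (fun x : (Fin k × Fin b) → F2 => ∑ i : Fin k, g (blk x i)) T|))
      = (Finset.univ.sup' Finset.univ_nonempty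
          (fun S : Finset (Fin b) => |hatFC g S|)) ^ k := by
  set M := Finset.univ.sup' Finset.univ_nonempty (fun S : Finset (Fin b) => |hatFC g S|) with hMdef
  apply le_antisymm
  · apply Finset.sup'_le
    intro T _
    rw [key, Finset.abs_prod]
    calc ∏ i : Fin k, |hatFC g (Finset.univ.filter (fun j => (i, j) ∈ T))|
        ≤ ∏ _i : Fin k, M :=
          Finset.prod_le_prod (fun i _ => abs_nonneg _)
            (fun i _ => Finset.le_sup' (fun S : Finset (Fin b) => |hatFC g S|) (Finset.mem_univ _))
      _ = M ^ k := by simp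
  · obtain ⟨S, -, hS⟩ := Finset.exists_mem_eq_sup' Finset.univ_nonempty
      (fun S : Finset (Fin b) => |hatFC g S|)
    have hfilter : ∀ i : Fin k,
        Finset.univ.filter (fun j => (i, j) ∈ Finset.univ ×ˢ S) = S := by
      intro i; ext j; simp
    have hT : |hatFC (fun x : (Fin k × Fin b) → F2 => ∑ i : Fin k, g (blk x i))
        (Finset.univ ×ˢ S)| = M ^ k := by
      rw [key, Finset.abs_prod]
      simp [hfilter, ← hS]
      rfl
    calc M ^ k = _ := hT.symm
      _ ≤ _ := Finset.le_sup'
          (fun T : Finset (Fin k × Fin b) =>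
            |hatFC (fun x : (Fin k × Fin b) → F2 => ∑ i : Fin k, g (blk x i)) T|)
          (Finset.mem_univ (Finset.univ ×ˢ S))
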